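/- For every $n \ge 1$, applying the composition derivation to the signature expansion of order $n$ yields the signature expansion of order $n+1$: $\sum_{w \models n} \chi(w)\, \mathrm{d}(w) = \sum_{w \models n+1} \chi(w)\, w$ in the free real vector space on compositions, where the sums are over all compositions of $n$ and of $n+1$ respectively. -/

import Mathlib

open Finset

/-- The set of compositions of `n` (lists of positive integers summing to `n`). -/
def comps : ℕ → Finset (List ℕ+)
  | 0 => {[]}
  | n + 1 =>
    (Finset.range (n + 1)).attach.biUnion fun k =>
      (comps k.1).image fun l =>
        (⟨n + 1 - k.1, Nat.sub_pos_of_lt (Finset.mem_range.mp k.2)⟩ : ℕ+) :: l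
  decreasing_by exact Finset.mem_range.mp k.2

/-- Signature character of a composition. -/
def chi : List ℕ+ → ℕ
  | [] => 1
  | a :: t => Nat.choose ((a : ℕ) + (t.map fun x => (x : ℕ)).sum) (a : ℕ) * chi t

/-- The Pöppe product of two basis compositions `u a` and `b v`:
`(u a) * (b v) = u(a+1)bv + ua(b+1)v + 2·(ua1bv)`, as an element of the free
vector space on compositions (zero if either composition is empty). -/
noncomputable def ppWord (u v : List ℕ+) : List ℕ+ →₀ ℝ :=
  match u.reverse, v with
  | a :: ur, b :: v' =>
      Finsupp.single (((a + 1) :: ur).reverse ++ b :: v') 1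
      + Finsupp.single ((a :: ur).reverse ++ (b + 1) :: v') 1
      + (2 : ℝ) • Finsupp.single ((a :: ur).reverse ++ (1 : ℕ+) :: b :: v') 1
  | _, _ => 0

/-- The bilinear Pöppe product on the free vector space on compositions. -/
noncomputable def poppeMul (x y : List ℕ+ →₀ ℝ) : List ℕ+ →₀ ℝ :=
  x.sum fun u cu => y.sum fun v cv => (cu * cv) • ppWord u v

/-- The signature expansion of order `n`: `∑_{w ⊨ n} χ(w)·w`. -/
noncomputable def sigExp (n : ℕ) : List ℕ+ →₀ ℝ :=
  ∑ w ∈ comps n, (chi w : ℝ) • Finsupp.single w 1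

/-- The derivation of a single composition: the sum of all single-letter increments
plus the sum of all insertions of a letter `1` into the gaps. -/
noncomputable def derWord (w : List ℕ+) : List ℕ+ →₀ ℝ :=
  (∑ k ∈ Finset.range w.length,
      Finsupp.single (w.take k ++ (w.getD k 1 + 1) :: w.drop (k + 1)) (1 : ℝ))
  + ∑ k ∈ Finset.range (w.length + 1),
      Finsupp.single (w.take k ++ (1 : ℕ+) :: w.drop k) (1 : ℝ)

/-- The derivation, extended linearly to the free vector space on compositions. -/
noncomputable def der (x : List ℕ+ →₀ ℝ) : List ℕ+ →₀ ℝ :=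
  x.sum fun w c => c • derWord w

lemma comps_sum : ∀ n : ℕ, ∀ w ∈ comps n, ((w.map fun x : ℕ+ => (x:ℕ)).sum) = n := by
  intro n
  induction n using Nat.strong_induction_on with
  | _ n ih =>
    match n with
    | 0 =>
      intro w hw
      rw [comps] at hw
      simp only [Finset.mem_singleton] at hw
      subst hw; simp
    | n + 1 =>
      intro w hw
      rw [comps] at hw
      simp only [Finset.mem_biUnion, Finset.mem_image, Finset.mem_attach] at hw
      obtain ⟨k, -, t, ht, rfl⟩ := hw
      have hk : k.1 < n + 1 := Finset.mem_range.mp k.2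
      have := ih k.1 hk t ht
      show (n + 1 - k.1) + (t.map fun x : ℕ+ => (x:ℕ)).sum = n + 1
      rw [this]
      show (n + 1 - k.1) + k.1 = n + 1
      omega

lemma chi_cons {m : ℕ} (a : ℕ+) {t : List ℕ+} (ht : t ∈ comps m) :
    chi (a :: t) = Nat.choose ((a : ℕ) + m) (a : ℕ) * chi t := by
  have h := comps_sum m t ht
  rw [chi]
  congr 2
  rw [← h]
  clear h ht
  induction t with
  | nil => rfl
  | cons b t ih => simp_all [List.sum_cons]

lemma sum_comps_succ {M : Type*} [AddCommMonoid M] (n : ℕ) (f : List ℕ+ → M) :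
    ∑ w ∈ comps (n + 1), f w
      = ∑ k ∈ Finset.range (n + 1), ∑ t ∈ comps k, f ((n + 1 - k).toPNat' :: t) := by
  rw [comps]
  rw [Finset.sum_biUnion]
  · rw [← Finset.sum_attach (Finset.range (n+1))
      (fun k => ∑ t ∈ comps k, f ((n + 1 - k).toPNat' :: t))]
    refine Finset.sum_congr rfl fun k _ => ?_
    rw [Finset.sum_image]
    · refine Finset.sum_congr rfl fun t _ => ?_
      congr 1
      have hk : k.1 < n + 1 := Finset.mem_range.mp k.2
      have : ((n + 1 - k.1).toPNat' : ℕ) = n + 1 - k.1 :=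
        PNat.toPNat'_coe (by omega)
      exact congrArg (· :: t) (PNat.coe_injective this.symm)
    · intro a _ b _ h
      exact (List.cons_injective h)
  · intro k _ k' _ hkk'
    apply Finset.disjoint_left.mpr
    intro w hw hw'
    simp only [Finset.mem_image] at hw hw'
    obtain ⟨t, -, rfl⟩ := hw
    obtain ⟨t', -, h⟩ := hw'
    apply hkk'
    have h1 := congrArg (fun l => l.headI) h
    simp only [List.headI] at h1
    have : n + 1 - k'.1 = n + 1 - k.1 := congrArg (PNat.val) h1
    have hk : k.1 < n + 1 := Finset.mem_range.mp k.2
    have hk' : k'.1 < n + 1 := Finset.mem_range.mp k'.2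
    exact Subtype.ext (by omega)

lemma derWord_nil : derWord [] = Finsupp.single [(1:ℕ+)] 1 := by
  simp [derWord]

lemma derWord_cons (a : ℕ+) (t : List ℕ+) :
    derWord (a :: t) = Finsupp.single ((a + 1) :: t) 1 + Finsupp.single ((1:ℕ+) :: a :: t) 1
      + Finsupp.mapDomain (a :: ·) (derWord t) := by
  rw [derWord, derWord]
  rw [show (a :: t).length = t.length + 1 from rfl]
  rw [Finset.sum_range_succ' _ t.length, Finset.sum_range_succ' _ (t.length + 1)]
  rw [Finsupp.mapDomain_add]
  rw [show Finsupp.mapDomain (a :: ·) = ⇑(Finsupp.mapDomain.addMonoidHom (a :: ·)) from rfl,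
    map_sum, map_sum]
  simp only [Finsupp.mapDomain.addMonoidHom_apply, Finsupp.mapDomain_single,
    List.take_succ_cons, List.drop_succ_cons, List.getD_cons_succ, List.take_zero,
    List.drop_zero, List.getD_cons_zero, List.nil_append, List.cons_append]
  abel

lemma mapDomain_sigExp (a : ℕ+) (m : ℕ) :
    Finsupp.mapDomain (a :: ·) (sigExp m)
      = ∑ s ∈ comps m, (chi s : ℝ) • Finsupp.single (a :: s) 1 := by
  rw [sigExp, show Finsupp.mapDomain ((a :: ·) : List ℕ+ → List ℕ+)
      = ⇑(Finsupp.mapDomain.addMonoidHom (a :: ·)) from rfl, map_sum]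
  refine Finset.sum_congr rfl fun s _ => ?_
  rw [Finsupp.mapDomain.addMonoidHom_apply, Finsupp.mapDomain_smul, Finsupp.mapDomain_single]

lemma main_zero : (∑ w ∈ comps 0, (chi w : ℝ) • derWord w) = sigExp 1 := by
  rw [show comps 0 = {[]} from by rw [comps]]
  rw [sigExp, sum_comps_succ 0]
  rw [Finset.sum_range_one, show comps 0 = {[]} from by rw [comps]]
  simp only [Finset.sum_singleton, derWord_nil]
  norm_num
  rfl

lemma main_all : ∀ n : ℕ, (∑ w ∈ comps n, (chi w : ℝ) • derWord w) = sigExp (n + 1) := by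
  intro n
  induction n using Nat.strong_induction_on with
  | _ n ih =>
  match n, ih with
  | 0, _ => exact main_zero
  | n + 1, ih =>
  have coeA : ∀ k, k < n + 1 → (((n + 1 - k).toPNat' : ℕ)) = n + 1 - k :=
    fun k hk => PNat.toPNat'_coe (by omega)
  -- abbreviations
  set F : ℕ → List ℕ+ →₀ ℝ := fun k =>
    ∑ t ∈ comps k, ((Nat.choose (n + 1) (n + 1 - k) * chi t : ℕ) : ℝ) •
      Finsupp.single (((n + 1 - k).toPNat' + 1) :: t) 1 with hF
  set G : ℕ → List ℕ+ →₀ ℝ := fun k =>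
    ((Nat.choose (n + 1) (n + 1 - k) : ℕ) : ℝ) •
      ∑ s ∈ comps (k + 1), (chi s : ℝ) • Finsupp.single ((n + 1 - k).toPNat' :: s) 1 with hG
  have key : ∀ k ∈ Finset.range (n + 1),
      (∑ t ∈ comps k, (chi ((n + 1 - k).toPNat' :: t) : ℝ) •
          derWord ((n + 1 - k).toPNat' :: t))
        = F k
          + (∑ t ∈ comps k, (chi ((n + 1 - k).toPNat' :: t) : ℝ) •
              Finsupp.single ((1 : ℕ+) :: (n + 1 - k).toPNat' :: t) 1)
          + G k := by
    intro k hk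
    have hk' : k < n + 1 := Finset.mem_range.mp hk
    have hchi : ∀ t ∈ comps k, chi ((n + 1 - k).toPNat' :: t)
        = Nat.choose (n + 1) (n + 1 - k) * chi t := by
      intro t ht
      rw [chi_cons _ ht, coeA k hk', show n + 1 - k + k = n + 1 by omega]
    calc ∑ t ∈ comps k, (chi ((n + 1 - k).toPNat' :: t) : ℝ) •
          derWord ((n + 1 - k).toPNat' :: t)
        = ∑ t ∈ comps k, ((chi ((n + 1 - k).toPNat' :: t) : ℝ) •
              Finsupp.single (((n + 1 - k).toPNat' + 1) :: t) 1
            + (chi ((n + 1 - k).toPNat' :: t) : ℝ) •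
              Finsupp.single ((1 : ℕ+) :: (n + 1 - k).toPNat' :: t) 1
            + (chi ((n + 1 - k).toPNat' :: t) : ℝ) •
              Finsupp.mapDomain ((n + 1 - k).toPNat' :: ·) (derWord t)) := by
          refine Finset.sum_congr rfl fun t _ => ?_
          rw [derWord_cons, smul_add, smul_add]
      _ = F k
          + (∑ t ∈ comps k, (chi ((n + 1 - k).toPNat' :: t) : ℝ) •
              Finsupp.single ((1 : ℕ+) :: (n + 1 - k).toPNat' :: t) 1)
          + G k := by
          rw [Finset.sum_add_distrib, Finset.sum_add_distrib]
          congr 2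
          · refine Finset.sum_congr rfl fun t ht => ?_
            rw [hchi t ht]
          · -- third piece
            have : ∀ t ∈ comps k, (chi ((n + 1 - k).toPNat' :: t) : ℝ) •
                Finsupp.mapDomain ((n + 1 - k).toPNat' :: ·) (derWord t)
                = ((Nat.choose (n + 1) (n + 1 - k) : ℕ) : ℝ) •
                  Finsupp.mapDomain ((n + 1 - k).toPNat' :: ·) ((chi t : ℝ) • derWord t) := by
              intro t ht
              rw [Finsupp.mapDomain_smul, hchi t ht, smul_smul, Nat.cast_mul]
            rw [Finset.sum_congr rfl this, ← Finset.smul_sum,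
              show (∑ t ∈ comps k, Finsupp.mapDomain ((n + 1 - k).toPNat' :: ·)
                  ((chi t : ℝ) • derWord t))
                = Finsupp.mapDomain ((n + 1 - k).toPNat' :: ·)
                  (∑ t ∈ comps k, (chi t : ℝ) • derWord t) from by
                rw [show Finsupp.mapDomain (((n + 1 - k).toPNat' :: ·) : List ℕ+ → List ℕ+)
                  = ⇑(Finsupp.mapDomain.addMonoidHom _) from rfl, map_sum],
              ih k hk', mapDomain_sigExp, hG]
  rw [sum_comps_succ n, Finset.sum_congr rfl key]
  rw [Finset.sum_add_distrib, Finset.sum_add_distrib]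
  -- T2 recombined
  rw [show (∑ k ∈ Finset.range (n + 1), ∑ t ∈ comps k,
        (chi ((n + 1 - k).toPNat' :: t) : ℝ) •
          Finsupp.single ((1 : ℕ+) :: (n + 1 - k).toPNat' :: t) 1)
      = ∑ w ∈ comps (n + 1), (chi w : ℝ) • (Finsupp.single ((1 : ℕ+) :: w) 1 : List ℕ+ →₀ ℝ) from
    (sum_comps_succ n (fun w => (chi w : ℝ) • (Finsupp.single ((1 : ℕ+) :: w) 1 : List ℕ+ →₀ ℝ))).symm]
  -- RHS expansion
  rw [sigExp, sum_comps_succ (n + 1)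
    (fun w => (chi w : ℝ) • Finsupp.single w 1)]
  rw [Finset.sum_range_succ (fun k => ∑ t ∈ comps k,
    (chi ((n + 1 + 1 - k).toPNat' :: t) : ℝ) •
      Finsupp.single ((n + 1 + 1 - k).toPNat' :: t) (1 : ℝ)) (n + 1)]
  rw [show n + 1 + 1 - (n + 1) = 1 from by omega, show (1 : ℕ).toPNat' = (1 : ℕ+) from rfl]
  -- peel T3 and reindex T1 / Main
  rw [Finset.sum_range_succ (fun k => G k) n]
  rw [Finset.sum_range_succ' (fun k => F k) n]
  rw [Finset.sum_range_succ' (fun k => ∑ s ∈ comps k,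
    (chi ((n + 1 + 1 - k).toPNat' :: s) : ℝ) •
      Finsupp.single ((n + 1 + 1 - k).toPNat' :: s) 1) n]
  have h0 : F 0 = ∑ s ∈ comps 0, (chi ((n + 1 + 1 - 0).toPNat' :: s) : ℝ) •
      Finsupp.single ((n + 1 + 1 - 0).toPNat' :: s) 1 := by
    simp only [hF]
    refine Finset.sum_congr rfl fun t ht => ?_
    have hhead : ((n + 1 - 0).toPNat' + 1 : ℕ+) = (n + 1 + 1 - 0).toPNat' := by
      apply PNat.coe_injective
      rw [PNat.add_coe, PNat.toPNat'_coe (by omega), PNat.toPNat'_coe (by omega), PNat.one_coe]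
      omega
    rw [hhead, chi_cons _ ht, PNat.toPNat'_coe (show 0 < n + 1 + 1 - 0 by omega)]
    norm_num
  have hmid : ∀ k ∈ Finset.range n, F (k + 1) + G k
      = ∑ s ∈ comps (k + 1), (chi ((n + 1 + 1 - (k + 1)).toPNat' :: s) : ℝ) •
          Finsupp.single ((n + 1 + 1 - (k + 1)).toPNat' :: s) 1 := by
    intro k hk
    have hkn : k < n := Finset.mem_range.mp hk
    have hhead2 : (n + 1 + 1 - (k + 1)).toPNat' = (n + 1 - k).toPNat' := by congr 1; omega
    have hhead1 : ((n + 1 - (k + 1)).toPNat' + 1 : ℕ+) = (n + 1 - k).toPNat' := by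
      apply PNat.coe_injective
      rw [PNat.add_coe, PNat.toPNat'_coe (by omega : 0 < n + 1 - (k + 1)),
        PNat.toPNat'_coe (by omega : 0 < n + 1 - k), PNat.one_coe]
      omega
    simp only [hF, hG]
    rw [hhead2, Finset.smul_sum, ← Finset.sum_add_distrib]
    refine Finset.sum_congr rfl fun s hs => ?_
    rw [hhead1, chi_cons _ hs, PNat.toPNat'_coe (by omega : 0 < n + 1 - k),
      show n + 1 - k + (k + 1) = n + 2 from by omega]
    rw [smul_smul, ← add_smul]
    congr 1
    rw [show n + 1 - (k + 1) = n - k from by omega]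
    have hp : Nat.choose (n + 2) (n + 1 - k)
        = Nat.choose (n + 1) (n - k) + Nat.choose (n + 1) (n + 1 - k) := by
      have h := Nat.choose_succ_succ (n + 1) (n - k)
      simp only [Nat.succ_eq_add_one] at h
      rw [show n - k + 1 = n + 1 - k from by omega, show n + 1 + 1 = n + 2 from by omega] at h
      exact h
    rw [hp]
    push_cast
    ring
  have htail : (∑ w ∈ comps (n + 1), (chi w : ℝ) • (Finsupp.single ((1 : ℕ+) :: w) 1 : List ℕ+ →₀ ℝ)) + G n
      = ∑ s ∈ comps (n + 1), (chi ((1 : ℕ+) :: s) : ℝ) •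
          Finsupp.single ((1 : ℕ+) :: s) 1 := by
    simp only [hG]
    rw [show (n + 1 - n).toPNat' = (1 : ℕ+) from by
        rw [show n + 1 - n = 1 from by omega]; rfl,
      Finset.smul_sum, ← Finset.sum_add_distrib]
    refine Finset.sum_congr rfl fun s hs => ?_
    rw [chi_cons _ hs, show ((1 : ℕ+) : ℕ) = 1 from rfl,
      show n + 1 - n = 1 from by omega, Nat.choose_one_right, Nat.choose_one_right]
    rw [smul_smul, ← add_smul]
    congr 1
    push_cast
    ring
  rw [← Finset.sum_congr rfl hmid, Finset.sum_add_distrib, ← h0, ← htail]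
  abel

/-- Applying the composition derivation to the signature expansion of order `n`
yields the signature expansion of order `n + 1`:
`∑_{w ⊨ n} χ(w) d(w) = ∑_{w ⊨ n+1} χ(w) w`. -/
theorem der_sigExp (n : ℕ) (hn : 1 ≤ n) :
    (∑ w ∈ comps n, (chi w : ℝ) • derWord w)
      = ∑ w ∈ comps (n + 1), (chi w : ℝ) • Finsupp.single w 1 := by
  rw [main_all n, sigExp]
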